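/- For every t ≤ 0 and every w ∈ W, ∫_{−∞}^{t} e^{yD*}((D + D*)(e^{(y−t)D} w)) dy = e^{tD*} w. (This is the compression relation Φ* ∘ S_t ∘ Φ = e^{tD*} for negative times for the right-translation group S_t f = f(· − t) on L²(ℝ; W) and the map Φ of the explicit dilation.) -/

import Mathlib

open MeasureTheory RealInnerProductSpace

section Aux

variable {W : Type*} [NormedAddCommGroup W] [InnerProductSpace ℝ W] [FiniteDimensional ℝ W]

/-- Integrability of `exp (c * y)` on `Iic t` for `c > 0`. -/
lemma aux_expMul_integrableOn (c t : ℝ) (hc : 0 < c) :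
    MeasureTheory.IntegrableOn (fun y => Real.exp (c * y)) (Set.Iic t) := by
  have h1 : Integrable ((Set.Iic (c * t)).indicator Real.exp) :=
    (integrable_indicator_iff measurableSet_Iic).2 (integrableOn_exp_Iic (c * t))
  have h2 := h1.comp_mul_left' hc.ne'
  rw [← integrable_indicator_iff measurableSet_Iic]
  have : (Set.Iic t).indicator (fun y => Real.exp (c * y)) =
      (fun x => (Set.Iic (c * t)).indicator Real.exp (c * x)) := by
    ext y
    by_cases hy : y ≤ t
    · rw [Set.indicator_of_mem (Set.mem_Iic.2 hy),
        Set.indicator_of_mem (Set.mem_Iic.2 (by nlinarith))]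
    · rw [Set.indicator_of_notMem (by simpa using hy),
        Set.indicator_of_notMem (by simp; nlinarith [lt_of_not_ge hy])]
  rw [this]; exact h2

/-- Coercivity constant for a positive-definite form. -/
lemma aux_coercive (T : W →L[ℝ] W) (h : ∀ w : W, w ≠ 0 → 0 < ⟪T w, w⟫) :
    ∃ c > 0, ∀ w : W, c * ‖w‖ ^ 2 ≤ ⟪T w, w⟫ := by
  rcases subsingleton_or_nontrivial W with hW | hW
  · exact ⟨1, one_pos, fun w => by
      rw [Subsingleton.elim w 0]; simp⟩
  · have hcont : Continuous fun w : W => ⟪T w, w⟫ :=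
      continuous_inner.comp ((T.continuous.comp continuous_id).prodMk continuous_id)
    obtain ⟨z, hz, hzmin⟩ := (isCompact_sphere (0 : W) 1).exists_isMinOn
      (NormedSpace.sphere_nonempty.2 zero_le_one) hcont.continuousOn
    have hz1 : ‖z‖ = 1 := by simpa using hz
    have hzne : z ≠ 0 := by intro h0; rw [h0] at hz1; simp at hz1
    refine ⟨⟪T z, z⟫, h z hzne, fun w => ?_⟩
    by_cases hw : w = 0
    · simp [hw]
    · have hwn : (0 : ℝ) < ‖w‖ := norm_pos_iff.2 hw
      have hmem : ‖w‖⁻¹ • w ∈ Metric.sphere (0 : W) 1 := by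
        simp [norm_smul, abs_of_pos (inv_pos.2 hwn), inv_mul_cancel₀ hwn.ne']
      have := hzmin hmem
      simp only [Set.mem_setOf_eq] at this
      have hsm : ⟪T (‖w‖⁻¹ • w), ‖w‖⁻¹ • w⟫ = ‖w‖⁻¹ * (‖w‖⁻¹ * ⟪T w, w⟫) := by
        rw [ContinuousLinearMap.map_smul, real_inner_smul_left, real_inner_smul_right]
      rw [hsm] at this
      have h4 : ‖w‖ ^ 2 * ⟪T z, z⟫ ≤ ‖w‖ ^ 2 * (‖w‖⁻¹ * (‖w‖⁻¹ * ⟪T w, w⟫)) :=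
        mul_le_mul_of_nonneg_left this (by positivity)
      have h5 : ‖w‖ ^ 2 * (‖w‖⁻¹ * (‖w‖⁻¹ * ⟪T w, w⟫)) = ⟪T w, w⟫ := by
        field_simp
      nlinarith [h4, h5]

/-- The basic semigroup vector, with its derivative. -/
lemma aux_hasDerivAt_exp_apply (A : W →L[ℝ] W) (v : W) (s : ℝ) :
    HasDerivAt (fun s : ℝ => NormedSpace.exp (s • A) v)
      (A (NormedSpace.exp (s • A) v)) s := by
  have h1 := (hasDerivAt_exp_smul_const' (𝕂 := ℝ) A s).clm_apply (hasDerivAt_const s v)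
  simpa using h1

/-- Exponential decay of the semigroup for nonpositive times. -/
lemma aux_exp_decay (A : W →L[ℝ] W) (c : ℝ)
    (hc : ∀ w : W, c * ‖w‖ ^ 2 ≤ ⟪A w, w⟫ + ⟪w, A w⟫) (v : W) {s : ℝ} (hs : s ≤ 0) :
    ‖NormedSpace.exp (s • A) v‖ ≤ Real.exp (c * s / 2) * ‖v‖ := by
  set u : ℝ → W := fun s => NormedSpace.exp (s • A) v with hu_def
  have hu : ∀ s, HasDerivAt u (A (u s)) s := aux_hasDerivAt_exp_apply A v
  have hg : ∀ s, HasDerivAt (fun s => ⟪u s, u s⟫)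
      (⟪u s, A (u s)⟫ + ⟪A (u s), u s⟫) s := fun s => (hu s).inner ℝ (hu s)
  set φ : ℝ → ℝ := fun s => Real.exp (-(c * s)) * ⟪u s, u s⟫ with hφ_def
  have hφ : ∀ s, HasDerivAt φ
      (Real.exp (-(c * s)) * ((⟪u s, A (u s)⟫ + ⟪A (u s), u s⟫) - c * ⟪u s, u s⟫)) s := by
    intro s
    have h1 : HasDerivAt (fun s : ℝ => Real.exp (-(c * s))) (-c * Real.exp (-(c * s))) s := by
      have := (((hasDerivAt_id s).const_mul c).neg).exp
      simpa [mul_comm] using this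
    have := h1.mul (hg s)
    refine this.congr_deriv ?_
    ring
  have hmono : Monotone φ :=
    monotone_of_deriv_nonneg (fun x => (hφ x).differentiableAt) (by
      intro x
      rw [(hφ x).deriv]
      have h2 : c * ‖u x‖ ^ 2 ≤ ⟪A (u x), u x⟫ + ⟪u x, A (u x)⟫ := hc (u x)
      have h3 : ⟪u x, u x⟫ = ‖u x‖ ^ 2 := real_inner_self_eq_norm_sq (u x)
      have h4 : (0:ℝ) ≤ (⟪u x, A (u x)⟫ + ⟪A (u x), u x⟫) - c * ⟪u x, u x⟫ := by
        rw [h3]; linarith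
      positivity)
  have h0 : φ s ≤ φ 0 := hmono hs
  have hu0 : u 0 = v := by
    simp [hu_def, NormedSpace.exp_zero]
  have hφ0 : φ 0 = ‖v‖ ^ 2 := by
    simp [hφ_def, hu0, real_inner_self_eq_norm_sq]
  have hkey : ‖u s‖ ^ 2 ≤ Real.exp (c * s) * ‖v‖ ^ 2 := by
    have hpos : (0:ℝ) < Real.exp (-(c * s)) := Real.exp_pos _
    have : Real.exp (-(c * s)) * ‖u s‖ ^ 2 ≤ ‖v‖ ^ 2 := by
      rw [← real_inner_self_eq_norm_sq, ← hφ0]; exact h0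
    calc ‖u s‖ ^ 2 = Real.exp (c * s) * (Real.exp (-(c * s)) * ‖u s‖ ^ 2) := by
          rw [← mul_assoc, ← Real.exp_add]; simp
      _ ≤ Real.exp (c * s) * ‖v‖ ^ 2 :=
          mul_le_mul_of_nonneg_left this (Real.exp_pos _).le
  have hrhs : Real.exp (c * s) * ‖v‖ ^ 2 = (Real.exp (c * s / 2) * ‖v‖) ^ 2 := by
    rw [mul_pow, sq (Real.exp (c * s / 2)), ← Real.exp_add]; ring_nf
  refine le_of_pow_le_pow_left₀ two_ne_zero (by positivity) ?_
  rw [← hrhs]; exact hkey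

end Aux

/-- Let `W` be a finite-dimensional real inner product space and
`D : W → W` a linear map with adjoint `D*` such that `⟨(D + D*)w, w⟩ > 0` for every
nonzero `w`.  For every `t ≤ 0` and every `w ∈ W`,
`∫_{−∞}^{t} e^{yD*}((D + D*)(e^{(y−t)D} w)) dy = e^{tD*} w`
(the compression relation `Φ* ∘ S_t ∘ Φ = e^{tD*}` for negative times for the
right-translation group on `L²(ℝ; W)`). -/
theorem compression_relation_nonpos_time
    {W : Type*} [NormedAddCommGroup W] [InnerProductSpace ℝ W] [FiniteDimensional ℝ W]
    (D : W →L[ℝ] W)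
    (hpos : ∀ w : W, w ≠ 0 → 0 < ⟪(D + ContinuousLinearMap.adjoint D) w, w⟫) :
    ∀ t : ℝ, t ≤ 0 → ∀ w : W,
      ∫ y in Set.Iic t,
        NormedSpace.exp (y • ContinuousLinearMap.adjoint D)
          ((D + ContinuousLinearMap.adjoint D) (NormedSpace.exp ((y - t) • D) w))
        = NormedSpace.exp (t • ContinuousLinearMap.adjoint D) w := by
  intro t ht w
  set E := ContinuousLinearMap.adjoint D with hE
  set S := D + E with hS
  obtain ⟨c, hcpos, hc⟩ := aux_coercive S hpos
  -- the coercivity in the "symmetric" form, for both D and E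
  have hcD : ∀ v : W, c * ‖v‖ ^ 2 ≤ ⟪D v, v⟫ + ⟪v, D v⟫ := by
    intro v
    have h1 : ⟪S v, v⟫ = ⟪D v, v⟫ + ⟪E v, v⟫ := by
      simp [hS, ContinuousLinearMap.add_apply, inner_add_left]
    have h2 : ⟪E v, v⟫ = ⟪v, D v⟫ := ContinuousLinearMap.adjoint_inner_left D v v
    have := hc v
    rw [h1, h2] at this
    exact this
  have hcE : ∀ v : W, c * ‖v‖ ^ 2 ≤ ⟪E v, v⟫ + ⟪v, E v⟫ := by
    intro v
    have h2 : ⟪E v, v⟫ = ⟪v, D v⟫ := ContinuousLinearMap.adjoint_inner_left D v v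
    have h3 : ⟪v, E v⟫ = ⟪D v, v⟫ := (ContinuousLinearMap.adjoint_inner_right D v v)
    rw [h2, h3, add_comm]
    exact hcD v
  -- the function F and its derivative
  set u : ℝ → W := fun y => NormedSpace.exp ((y - t) • D) w with hu_def
  set F : ℝ → W := fun y => NormedSpace.exp (y • E) (u y) with hF_def
  have hu : ∀ y, HasDerivAt u (D (u y)) y := by
    intro y
    have h1 := aux_hasDerivAt_exp_apply D w (y - t)
    have hyd : HasDerivAt (fun x : ℝ => x - t) 1 y := (hasDerivAt_id y).sub_const t
    have h2 := HasDerivAt.scomp y h1 hyd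
    simpa [Function.comp_def] using h2
  have hF : ∀ y, HasDerivAt F (NormedSpace.exp (y • E) (S (u y))) y := by
    intro y
    have h1 := (hasDerivAt_exp_smul_const' (𝕂 := ℝ) E y).clm_apply (hu y)
    have hco : NormedSpace.exp (y • E) * E = E * NormedSpace.exp (y • E) :=
      (hasDerivAt_exp_smul_const (𝕂 := ℝ) E y).unique
        (hasDerivAt_exp_smul_const' (𝕂 := ℝ) E y)
    have happ : (E * NormedSpace.exp (y • E)) (u y) =
        NormedSpace.exp (y • E) (E (u y)) := by
      rw [← hco]; rfl
    convert h1 using 1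
    rw [happ, hS]
    simp only [ContinuousLinearMap.add_apply, map_add]
    abel
  -- the second derivative form, used only for continuity of the integrand
  have hGd : ∀ y : ℝ, ContinuousAt (fun y => NormedSpace.exp (y • E) (S (u y))) y := by
    intro y
    have hSu : HasDerivAt (fun y => S (u y)) ((0 : W →L[ℝ] W) (u y) + S (D (u y))) y :=
      (hasDerivAt_const y S).clm_apply (hu y)
    exact ((hasDerivAt_exp_smul_const' (𝕂 := ℝ) E y).clm_apply hSu).continuousAt
  -- bounds
  have hdecD : ∀ y : ℝ, y ≤ t → ‖u y‖ ≤ Real.exp (c * (y - t) / 2) * ‖w‖ := fun y hy =>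
    aux_exp_decay D c hcD w (by linarith)
  have hdecE : ∀ (y : ℝ) (v : W), y ≤ t → ‖NormedSpace.exp (y • E) v‖ ≤
      Real.exp (c * y / 2) * ‖v‖ := fun y v hy =>
    aux_exp_decay E c hcE v (by linarith)
  have hnorm : ∀ y : ℝ, y ≤ t → ‖NormedSpace.exp (y • E) (S (u y))‖ ≤
      Real.exp (c * y) * (Real.exp (-(c * t) / 2) * (‖S‖ * ‖w‖)) := by
    intro y hy
    have h1 : ‖NormedSpace.exp (y • E) (S (u y))‖ ≤ Real.exp (c * y / 2) * ‖S (u y)‖ :=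
      hdecE y (S (u y)) hy
    have h2 : ‖S (u y)‖ ≤ ‖S‖ * ‖u y‖ := S.le_opNorm (u y)
    have h3 : ‖u y‖ ≤ Real.exp (c * (y - t) / 2) * ‖w‖ := hdecD y hy
    have h4 : ‖NormedSpace.exp (y • E) (S (u y))‖ ≤
        Real.exp (c * y / 2) * (‖S‖ * (Real.exp (c * (y - t) / 2) * ‖w‖)) := by
      calc ‖NormedSpace.exp (y • E) (S (u y))‖ ≤ Real.exp (c * y / 2) * ‖S (u y)‖ := h1
        _ ≤ Real.exp (c * y / 2) * (‖S‖ * ‖u y‖) := by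
            apply mul_le_mul_of_nonneg_left h2 (Real.exp_pos _).le
        _ ≤ Real.exp (c * y / 2) * (‖S‖ * (Real.exp (c * (y - t) / 2) * ‖w‖)) := by
            apply mul_le_mul_of_nonneg_left _ (Real.exp_pos _).le
            exact mul_le_mul_of_nonneg_left h3 (norm_nonneg S)
    calc ‖NormedSpace.exp (y • E) (S (u y))‖
        ≤ Real.exp (c * y / 2) * (‖S‖ * (Real.exp (c * (y - t) / 2) * ‖w‖)) := h4
      _ = Real.exp (c * y) * (Real.exp (-(c * t) / 2) * (‖S‖ * ‖w‖)) := by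
          rw [show Real.exp (c * y) * (Real.exp (-(c * t) / 2) * (‖S‖ * ‖w‖)) =
            (Real.exp (c * y) * Real.exp (-(c * t) / 2)) * (‖S‖ * ‖w‖) by ring,
            ← Real.exp_add]
          rw [show Real.exp (c * y / 2) * (‖S‖ * (Real.exp (c * (y - t) / 2) * ‖w‖)) =
            (Real.exp (c * y / 2) * Real.exp (c * (y - t) / 2)) * (‖S‖ * ‖w‖) by ring,
            ← Real.exp_add]
          ring_nf
  -- integrability of the integrand
  have hintg : IntegrableOn (fun y => NormedSpace.exp (y • E) (S (u y))) (Set.Iic t) := by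
    have hgi : IntegrableOn
        (fun y => Real.exp (c * y) * (Real.exp (-(c * t) / 2) * (‖S‖ * ‖w‖)))
        (Set.Iic t) :=
      (aux_expMul_integrableOn c t hcpos).mul_const _
    refine Integrable.mono' hgi ?_ ?_
    · exact ((continuous_iff_continuousAt.2 hGd).continuousOn).aestronglyMeasurable
        measurableSet_Iic
    · filter_upwards [ae_restrict_mem measurableSet_Iic] with y hy
      exact hnorm y hy
  -- F tends to 0 at -∞
  have htend : Filter.Tendsto F Filter.atBot (nhds 0) := by
    apply squeeze_zero_norm' (a := fun y => Real.exp (c * y) * (Real.exp (-(c * t) / 2) * ‖w‖))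
    · filter_upwards [Filter.Iic_mem_atBot t] with y hy
      have h1 : ‖F y‖ ≤ Real.exp (c * y / 2) * ‖u y‖ := hdecE y (u y) hy
      have h3 : ‖u y‖ ≤ Real.exp (c * (y - t) / 2) * ‖w‖ := hdecD y hy
      calc ‖F y‖ ≤ Real.exp (c * y / 2) * (Real.exp (c * (y - t) / 2) * ‖w‖) :=
            h1.trans (mul_le_mul_of_nonneg_left h3 (Real.exp_pos _).le)
        _ = Real.exp (c * y) * (Real.exp (-(c * t) / 2) * ‖w‖) := by
            rw [show Real.exp (c * y / 2) * (Real.exp (c * (y - t) / 2) * ‖w‖) =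
              (Real.exp (c * y / 2) * Real.exp (c * (y - t) / 2)) * ‖w‖ by ring, ← Real.exp_add,
              show Real.exp (c * y) * (Real.exp (-(c * t) / 2) * ‖w‖) =
              (Real.exp (c * y) * Real.exp (-(c * t) / 2)) * ‖w‖ by ring, ← Real.exp_add]
            ring_nf
    · have h1 : Filter.Tendsto (fun y : ℝ => c * y) Filter.atBot Filter.atBot :=
        (Filter.tendsto_const_mul_atBot_of_pos hcpos).2 Filter.tendsto_id
      have h2 : Filter.Tendsto (fun y : ℝ => Real.exp (c * y)) Filter.atBot (nhds 0) :=
        Real.tendsto_exp_atBot.comp h1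
      simpa using h2.mul_const (Real.exp (-(c * t) / 2) * ‖w‖)
  -- conclude by the FTC on (-∞, t]
  have hmain := integral_Iic_of_hasDerivAt_of_tendsto' (fun y _ => hF y) hintg htend
  rw [hmain, sub_zero]
  have hut : u t = w := by
    simp [hu_def, sub_self, zero_smul, NormedSpace.exp_zero]
  show NormedSpace.exp (t • E) (u t) = NormedSpace.exp (t • E) w
  rw [hut]
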